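/- Let P = {x ∈ ℝ^d : ⟨a^i, x⟩ ≤ b_i, 1 ≤ i ≤ m} be a d-dimensional polytope with irredundant representation, with support function h, and containing its centroid at the origin. Define v_i(x) = (2⟨a^i,x⟩ − h(a^i) + h(−a^i)) / (h(a^i) + h(−a^i)). For ε > 0 choose an integer p > ln(m) / (2 ln(1 + 2ε/((d+1)·diam(P)))) and set p_ε(x) = (1/m) ∑_{i=1}^m v_i(x)^{2p} and K_ε = {x : p_ε(x) ≤ 1}. Then P ⊆ K_ε and the Hausdorff distance satisfies dist(P, K_ε) ≤ ε. -/

import Mathlib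

open MeasureTheory
open scoped RealInnerProductSpace

/-- The support function `h(u) = sup{⟨u,x⟩ : x ∈ P}`. -/
noncomputable def suppFn {d : ℕ} (P : Set (EuclideanSpace ℝ (Fin d)))
    (u : EuclideanSpace ℝ (Fin d)) : ℝ :=
  sSup ((fun x => (inner ℝ u x : ℝ)) '' P)

section Aux

variable {d : ℕ} {P : Set (EuclideanSpace ℝ (Fin d))}

lemma inner_le_suppFn (hc : IsCompact P) (u : EuclideanSpace ℝ (Fin d))
    {x : EuclideanSpace ℝ (Fin d)} (hx : x ∈ P) : ⟪u, x⟫ ≤ suppFn P u := by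
  refine le_csSup ?_ ⟨x, hx, rfl⟩
  exact (hc.image (continuous_const.inner continuous_id)).bddAbove

lemma exists_suppFn_attained (hc : IsCompact P) (hne : P.Nonempty)
    (u : EuclideanSpace ℝ (Fin d)) : ∃ x ∈ P, ⟪u, x⟫ = suppFn P u := by
  obtain ⟨x, hxP, hmax⟩ := hc.exists_isMaxOn hne
    ((continuous_const.inner continuous_id).continuousOn
      (s := P) (f := fun y => ⟪u, y⟫))
  refine ⟨x, hxP, le_antisymm (inner_le_suppFn hc u hxP) ?_⟩
  refine csSup_le (hne.image _) ?_
  rintro r ⟨y, hyP, rfl⟩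
  exact hmax hyP

lemma suppFn_add_suppFn_neg_nonneg (hc : IsCompact P) (hne : P.Nonempty)
    (u : EuclideanSpace ℝ (Fin d)) : 0 ≤ suppFn P u + suppFn P (-u) := by
  obtain ⟨x, hx⟩ := hne
  have h1 := inner_le_suppFn hc u hx
  have h2 := inner_le_suppFn hc (-u) hx
  rw [inner_neg_left] at h2
  linarith

/-- Deep point: via Helly's theorem, a convex compact nonempty set admits a point that is
`w_i/(d+1)`-deep with respect to each direction `a i`. -/
lemma exists_deep_point {m : ℕ} (a : Fin m → EuclideanSpace ℝ (Fin d))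
    (hconv : Convex ℝ P) (hc : IsCompact P) (hne : P.Nonempty) :
    ∃ c ∈ P, ∀ i, ⟪a i, c⟫ ≤ suppFn P (a i) -
      (suppFn P (a i) + suppFn P (-a i)) / (d + 1) := by
  classical
  choose z hzP hz using fun i => exists_suppFn_attained hc hne (-(a i))
  set A : Fin m → ℝ := fun i => suppFn P (a i) with hA
  set B : Fin m → ℝ := fun i => suppFn P (-a i) with hB
  set C : Fin m → Set (EuclideanSpace ℝ (Fin d)) :=
    fun i => P ∩ {x | ⟪a i, x⟫ ≤ A i - (A i + B i) / (d + 1)} with hC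
  have hconvC : ∀ i ∈ Finset.univ, Convex ℝ (C i) := by
    intro i _
    refine hconv.inter (convex_halfSpace_le ?_ _)
    exact ⟨fun x y => inner_add_right _ _ _, fun r x => real_inner_smul_right _ _ _⟩
  have hinter : ∀ I ⊆ Finset.univ, I.card ≤ Module.finrank ℝ (EuclideanSpace ℝ (Fin d)) + 1 →
      (⋂ i ∈ I, C i).Nonempty := by
    intro I _ hIcard
    rw [finrank_euclideanSpace_fin] at hIcard
    rcases I.eq_empty_or_nonempty with rfl | hIne
    · exact ⟨hne.some, by simp⟩
    have hk0 : 0 < I.card := Finset.card_pos.mpr hIne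
    have hkR : (0 : ℝ) < I.card := by exact_mod_cast hk0
    set c : EuclideanSpace ℝ (Fin d) := ((I.card : ℝ))⁻¹ • ∑ j ∈ I, z j with hcdef
    have hcP : c ∈ P := by
      have : I.centerMass (fun _ => (1 : ℝ)) z ∈ P :=
        hconv.centerMass_mem (fun _ _ => zero_le_one) (by simpa using hkR)
          (fun j _ => hzP j)
      simpa [Finset.centerMass, hcdef] using this
    refine ⟨c, ?_⟩
    simp only [Set.mem_iInter]
    intro i hiI
    refine ⟨hcP, ?_⟩
    have hzi : ⟪a i, z i⟫ = -B i := by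
      have := hz i
      rw [inner_neg_left] at this
      linarith
    have hsum : ∑ j ∈ I, ⟪a i, z j⟫ ≤ ((I.card : ℝ) - 1) * A i - B i := by
      rw [← Finset.add_sum_erase _ _ hiI, hzi]
      have hbd : ∑ j ∈ I.erase i, ⟪a i, z j⟫ ≤ (I.erase i).card • A i :=
        Finset.sum_le_card_nsmul _ _ _ (fun j _ => inner_le_suppFn hc (a i) (hzP j))
      rw [nsmul_eq_mul, Finset.card_erase_of_mem hiI, Nat.cast_sub hk0] at hbd
      push_cast at hbd ⊢
      linarith
    have hinnerc : ⟪a i, c⟫ = ((I.card : ℝ))⁻¹ * ∑ j ∈ I, ⟪a i, z j⟫ := by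
      rw [hcdef, real_inner_smul_right, inner_sum]
    have hABnn : 0 ≤ A i + B i := suppFn_add_suppFn_neg_nonneg hc hne (a i)
    have hstep : ⟪a i, c⟫ ≤ A i - (A i + B i) / I.card := by
      rw [hinnerc]
      have h1 : ((I.card : ℝ))⁻¹ * ∑ j ∈ I, ⟪a i, z j⟫ ≤
          ((I.card : ℝ))⁻¹ * (((I.card : ℝ) - 1) * A i - B i) :=
        mul_le_mul_of_nonneg_left hsum (by positivity)
      have h2 : ((I.card : ℝ))⁻¹ * (((I.card : ℝ) - 1) * A i - B i)
          = A i - (A i + B i) / I.card := by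
        field_simp
        ring
      linarith
    have hkd : (I.card : ℝ) ≤ (d : ℝ) + 1 := by exact_mod_cast hIcard
    have hmono : (A i + B i) / ((d : ℝ) + 1) ≤ (A i + B i) / I.card :=
      div_le_div_of_nonneg_left hABnn hkR hkd
    exact Set.mem_setOf.mpr (by linarith)
  obtain ⟨c, hc'⟩ := Convex.helly_theorem' hconvC hinter
  simp only [Set.mem_iInter, Finset.mem_univ, true_implies] at hc'
  rcases Nat.eq_zero_or_pos m with rfl | hm0
  · exact ⟨hne.some, hne.some_mem, fun i => i.elim0⟩
  · have : Nonempty (Fin m) := ⟨⟨0, hm0⟩⟩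
    exact ⟨c, (hc' (Classical.arbitrary _)).1, fun i => (hc' i).2⟩

end Aux

/-- Hammer-type approximation: for a full-dimensional polytope
`P = {x : ⟨aⁱ,x⟩ ≤ bᵢ}` with irredundant representation (`bᵢ = h(aⁱ)`) and
centroid at the origin, with `vᵢ(x) = (2⟨aⁱ,x⟩ - h(aⁱ) + h(-aⁱ))/(h(aⁱ) + h(-aⁱ))`,
`ε > 0`, integer `p > ln m / (2 ln(1 + 2ε/((d+1) diam P)))`,
`p_ε(x) = (1/m) ∑ᵢ vᵢ(x)^{2p}` and `K_ε = {x : p_ε(x) ≤ 1}`, one has `P ⊆ K_ε`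
and `dist(P, K_ε) ≤ ε` in the Hausdorff distance. -/
theorem polytope_polynomial_approximation (d m : ℕ) (hm : 0 < m)
    (a : Fin m → EuclideanSpace ℝ (Fin d)) (b : Fin m → ℝ)
    (P : Set (EuclideanSpace ℝ (Fin d)))
    (hP : P = {x | ∀ i, (inner ℝ (a i) x : ℝ) ≤ b i})
    (hcomp : IsCompact P) (hfull : (interior P).Nonempty)
    (hb : ∀ i, b i = suppFn P (a i))
    (hcent : (∫ x in P, x ∂volume) = 0)
    (v : Fin m → EuclideanSpace ℝ (Fin d) → ℝ)
    (hv : ∀ i x, v i x = (2 * (inner ℝ (a i) x : ℝ) - suppFn P (a i) + suppFn P (-a i)) /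
      (suppFn P (a i) + suppFn P (-a i)))
    (ε : ℝ) (hε : 0 < ε) (p : ℕ)
    (hp : Real.log m / (2 * Real.log (1 + 2 * ε / ((d + 1) * Metric.diam P))) < (p : ℝ))
    (K : Set (EuclideanSpace ℝ (Fin d)))
    (hK : K = {x | (∑ i, v i x ^ (2 * p)) / m ≤ 1}) :
    P ⊆ K ∧ Metric.hausdorffDist P K ≤ ε := by
  have hm' : (0:ℝ) < m := by exact_mod_cast hm
  have hPne : P.Nonempty := hfull.mono interior_subset
  have hconv : Convex ℝ P := by
    rw [hP]
    intro x hx y hy α β hα hβ hab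
    simp only [Set.mem_setOf_eq] at hx hy ⊢
    intro i
    rw [inner_add_right, real_inner_smul_right, real_inner_smul_right]
    have h1 : α * ⟪a i, x⟫ ≤ α * b i := mul_le_mul_of_nonneg_left (hx i) hα
    have h2 : β * ⟪a i, y⟫ ≤ β * b i := mul_le_mul_of_nonneg_left (hy i) hβ
    have h3 : α * b i + β * b i = b i := by rw [← add_mul, hab, one_mul]
    linarith
  have habs1 : ∀ x ∈ P, ∀ i, v i x ^ (2*p) ≤ 1 := by
    intro x hx i
    have h1 : ⟪a i, x⟫ ≤ suppFn P (a i) := inner_le_suppFn hcomp _ hx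
    have h2 : -⟪a i, x⟫ ≤ suppFn P (-a i) := by
      have := inner_le_suppFn hcomp (-(a i)) hx
      rwa [inner_neg_left] at this
    have habs : |v i x| ≤ 1 := by
      rw [hv]
      rcases eq_or_lt_of_le (suppFn_add_suppFn_neg_nonneg hcomp hPne (a i)) with h0 | h0
      · have hnum : 2 * ⟪a i, x⟫ - suppFn P (a i) + suppFn P (-a i) = 0 := by linarith
        rw [hnum, zero_div, abs_zero]
        exact zero_le_one
      · rw [abs_div, div_le_one (by rwa [abs_of_pos h0])]
        rw [abs_le]
        constructor <;> [skip; skip] <;> rw [abs_of_pos h0] <;> linarith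
    calc v i x ^ (2*p) ≤ |v i x| ^ (2*p) := by
          rw [← abs_pow]; exact le_abs_self _
      _ ≤ 1 := pow_le_one₀ (abs_nonneg _) habs
  have part1 : P ⊆ K := by
    intro x hx
    rw [hK]
    simp only [Set.mem_setOf_eq]
    rw [div_le_one hm']
    calc ∑ i, v i x ^ (2*p) ≤ ∑ _i : Fin m, (1:ℝ) :=
          Finset.sum_le_sum (fun i _ => habs1 x hx i)
      _ = m := by simp
  rcases subsingleton_or_nontrivial (EuclideanSpace ℝ (Fin d)) with hss | hnt
  · refine ⟨part1, ?_⟩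
    have hKP : K = P := by
      refine Set.Subset.antisymm (fun x _ => ?_) part1
      obtain ⟨x0, hx0⟩ := hPne
      rwa [Subsingleton.elim x x0]
    rw [hKP, Metric.hausdorffDist_self_zero]
    exact hε.le
  -- nontrivial case
  obtain ⟨c0, hc0⟩ := hfull
  obtain ⟨r, hr, hball⟩ := Metric.mem_nhds_iff.mp (mem_interior_iff_mem_nhds.mp hc0)
  have hballP : ∀ (u : EuclideanSpace ℝ (Fin d)), ‖u‖ = 1 → ∀ t : ℝ, |t| < r →
      c0 + t • u ∈ P := by
    intro u hu t ht
    apply hball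
    rw [Metric.mem_ball, dist_eq_norm, add_sub_cancel_left, norm_smul, Real.norm_eq_abs, hu,
      mul_one]
    exact ht
  have hD : 0 < Metric.diam P := by
    obtain ⟨u0, hu0⟩ := exists_ne (0 : EuclideanSpace ℝ (Fin d))
    set u := ‖u0‖⁻¹ • u0 with hu
    have hun : ‖u‖ = 1 := norm_smul_inv_norm hu0
    have h1 : c0 + (r/2) • u ∈ P := hballP u hun (r/2) (by rw [abs_of_pos (by linarith)]; linarith)
    have h2 : c0 ∈ P := hball (Metric.mem_ball_self hr)
    have h3 := Metric.dist_le_diam_of_mem hcomp.isBounded h1 h2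
    rw [dist_eq_norm, add_sub_cancel_left, norm_smul, Real.norm_eq_abs, hun, mul_one,
      abs_of_pos (by linarith : (0:ℝ) < r/2)] at h3
    linarith
  have hw : ∀ i, a i ≠ 0 → 0 < suppFn P (a i) + suppFn P (-a i) := by
    intro i hai
    have hna : (0:ℝ) < ‖a i‖ := norm_pos_iff.mpr hai
    set u := ‖a i‖⁻¹ • a i with hu
    have hun : ‖u‖ = 1 := norm_smul_inv_norm hai
    have hinu : ⟪a i, u⟫ = ‖a i‖ := by
      rw [hu, real_inner_smul_right, real_inner_self_eq_norm_mul_norm]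
      field_simp
    have h1 : c0 + (r/2) • u ∈ P := hballP u hun (r/2) (by rw [abs_of_pos (by linarith)]; linarith)
    have h2 : c0 + (-(r/2)) • u ∈ P := hballP u hun (-(r/2)) (by rw [abs_neg, abs_of_pos (by linarith)]; linarith)
    have b1 := inner_le_suppFn hcomp (a i) h1
    have b2 := inner_le_suppFn hcomp (-(a i)) h2
    rw [inner_neg_left] at b2
    rw [inner_add_right, real_inner_smul_right, hinu] at b1 b2
    nlinarith
  set D := Metric.diam P with hDdef
  set l := 2 * ε / (((d:ℝ) + 1) * D) with hldef
  have hl : 0 < l := by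
    rw [hldef]
    positivity
  have hlog : (0:ℝ) < Real.log (1 + l) := Real.log_pos (by linarith)
  have hmlt : (m:ℝ) < (1 + l) ^ (2*p) := by
    have h1 : Real.log m < p * (2 * Real.log (1+l)) := (div_lt_iff₀ (by positivity)).mp hp
    have h2 : Real.log m < Real.log ((1+l) ^ (2*p)) := by
      rw [Real.log_pow]
      push_cast
      linarith
    calc (m:ℝ) = Real.exp (Real.log m) := (Real.exp_log hm').symm
      _ < Real.exp (Real.log ((1+l)^(2*p))) := Real.exp_lt_exp.mpr h2
      _ = (1+l)^(2*p) := Real.exp_log (by positivity)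
  obtain ⟨c, hcP, hdeep⟩ := exists_deep_point a hconv hcomp hPne
  have hsupp0 : suppFn P (0 : EuclideanSpace ℝ (Fin d)) = 0 := by
    unfold suppFn
    have himg : (fun x : EuclideanSpace ℝ (Fin d) => (inner ℝ (0 : EuclideanSpace ℝ (Fin d)) x : ℝ)) '' P = {0} := by
      have : (fun x : EuclideanSpace ℝ (Fin d) => (inner ℝ (0 : EuclideanSpace ℝ (Fin d)) x : ℝ)) = fun _ => (0:ℝ) :=
        funext fun x => inner_zero_left x
      rw [this]
      exact hPne.image_const 0
    rw [himg, csSup_singleton]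
  set s := ε / D with hsdef
  have hs : 0 < s := div_pos hε hD
  have h1s : (0:ℝ) < 1 + s := by linarith
  have hdist2 : ∀ x ∈ K, Metric.infDist x P ≤ ε := by
    intro x hx
    rw [hK] at hx
    simp only [Set.mem_setOf_eq] at hx
    rw [div_le_one hm'] at hx
    have hterm : ∀ i, v i x ^ (2*p) ≤ m := fun i =>
      le_trans (Finset.single_le_sum (f := fun j => v j x ^ (2*p))
        (fun j _ => (even_two_mul p).pow_nonneg _) (Finset.mem_univ i)) hx
    have habs : ∀ i, |v i x| < 1 + l := by
      intro i
      by_contra hge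
      push_neg at hge
      have h1 : (1+l)^(2*p) ≤ |v i x| ^ (2*p) := pow_le_pow_left₀ (by linarith) hge _
      rw [← abs_pow, abs_of_nonneg ((even_two_mul p).pow_nonneg _)] at h1
      linarith [hterm i]
    have hkey : ∀ i, ⟪a i, x⟫ ≤ suppFn P (a i) + s * (suppFn P (a i) - ⟪a i, c⟫) := by
      intro i
      by_cases hai : a i = 0
      · rw [hai, hsupp0, inner_zero_left, inner_zero_left]
        have : s * (0 - 0) = 0 := by ring
        rw [this]
        norm_num
      · have hwpos := hw i hai
        have hvi : v i x < 1 + l := (le_abs_self _).trans_lt (habs i)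
        rw [hv, div_lt_iff₀ hwpos] at hvi
        set Ai := suppFn P (a i) with hAi
        set Bi := suppFn P (-a i) with hBi
        have hd := hdeep i
        have heq : l * (Ai+Bi) / 2 = s * ((Ai+Bi)/((d:ℝ)+1)) := by
          rw [hldef, hsdef]
          field_simp
        have hmul : s * ((Ai+Bi)/((d:ℝ)+1)) ≤ s * (Ai - ⟪a i, c⟫) :=
          mul_le_mul_of_nonneg_left (by linarith) hs.le
        have hexp : (1+l) * (Ai+Bi) = Ai + Bi + l * (Ai+Bi) := by ring
        linarith
    set y := c + (1+s)⁻¹ • (x - c) with hy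
    have hyP : y ∈ P := by
      rw [hP]
      simp only [Set.mem_setOf_eq]
      intro i
      rw [hb i]
      have hiy : (inner ℝ (a i) y : ℝ) = ⟪a i, c⟫ + (1+s)⁻¹ * (⟪a i, x⟫ - ⟪a i, c⟫) := by
        rw [hy, inner_add_right, real_inner_smul_right, inner_sub_right]
      rw [hiy]
      have hq := hkey i
      have h3 : (1+s)⁻¹ * (⟪a i, x⟫ - ⟪a i, c⟫) ≤ suppFn P (a i) - ⟪a i, c⟫ := by
        rw [inv_mul_le_iff₀ h1s]
        have hexp : (1+s) * (suppFn P (a i) - ⟪a i, c⟫)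
            = suppFn P (a i) - ⟪a i, c⟫ + s * (suppFn P (a i) - ⟪a i, c⟫) := by ring
        linarith
      linarith
    have hxy : x - y = (1 - (1+s)⁻¹) • (x - c) := by
      rw [hy, sub_smul, one_smul]
      abel
    have hyc : y - c = (1+s)⁻¹ • (x - c) := by
      rw [hy]
      abel
    have hinv1 : (1+s)⁻¹ ≤ 1 := by
      rw [inv_le_one_iff₀]
      right; linarith
    have e1 : ‖x - y‖ = (1 - (1+s)⁻¹) * ‖x - c‖ := by
      rw [hxy, norm_smul, Real.norm_eq_abs, abs_of_nonneg (by linarith)]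
    have e2 : ‖y - c‖ = (1+s)⁻¹ * ‖x - c‖ := by
      rw [hyc, norm_smul, Real.norm_eq_abs, abs_of_nonneg (by positivity)]
    have e3 : ‖y - c‖ ≤ D := by
      have h5 := Metric.dist_le_diam_of_mem hcomp.isBounded hyP hcP
      rwa [dist_eq_norm] at h5
    have e4 : 1 - (1+s)⁻¹ = s * (1+s)⁻¹ := by
      field_simp
      ring
    have e5 : s * D = ε := by
      rw [hsdef]
      field_simp
    have hnorm : dist x y ≤ ε := by
      rw [dist_eq_norm, e1, e4]
      calc s * (1+s)⁻¹ * ‖x - c‖ = s * ‖y - c‖ := by rw [e2]; ring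
        _ ≤ s * D := mul_le_mul_of_nonneg_left e3 hs.le
        _ = ε := e5
    exact (Metric.infDist_le_dist_of_mem hyP).trans hnorm
  refine ⟨part1, Metric.hausdorffDist_le_of_infDist hε.le ?_ hdist2⟩
  intro x hxP
  have h6 := Metric.infDist_le_dist_of_mem (part1 hxP) (x := x)
  rw [dist_self] at h6
  linarith
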